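/- Let H be a finite simple undirected graph and k ∈ ℕ. Construct an instance of anonymous refugee housing with upper-bounds as follows: the topology G' is the subdivision of H, i.e., G' has vertex set V(H) together with one new vertex w_e for every edge e = {u,v} ∈ E(H), where w_e is adjacent exactly to u and to v; every subdivision vertex w_e is occupied by an inhabitant h_e with ub(h_e) = 1; all original vertices of H are empty; and the number of refugees is R = k. Then H has an independent set of size at least k if and only if this instance admits an inhabitants-respecting housing of size k. Moreover, a set π ⊆ V(H) of size k is an inhabitants-respecting housing in the constructed instance if and only if π is an independent set in H. -/
import Mathlib

section Aux
set_option linter.unusedSectionVars false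

variable {W : Type*} [Fintype W] [DecidableEq W]
    (H : SimpleGraph W) [DecidableRel H.Adj]
    (G : SimpleGraph (W ⊕ ↥H.edgeSet)) [DecidableRel G.Adj]

lemma aux_adj_inr
    (hadj : ∀ x y, G.Adj x y ↔ ∃ (v : W) (e : H.edgeSet), v ∈ (e : Sym2 W) ∧
        ((x = Sum.inl v ∧ y = Sum.inr e) ∨ (x = Sum.inr e ∧ y = Sum.inl v))) (e : H.edgeSet) (x : W ⊕ ↥H.edgeSet) :
    G.Adj (Sum.inr e) x ↔ ∃ v : W, v ∈ (e : Sym2 W) ∧ x = Sum.inl v := by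
  rw [hadj]
  constructor
  · rintro ⟨v, e', hv, ⟨h1, h2⟩ | ⟨h1, h2⟩⟩
    · exact absurd h1 (by simp)
    · refine ⟨v, ?_, h2⟩
      have : e = e' := by simpa using h1
      rw [this]; exact hv
  · rintro ⟨v, hv, hx⟩
    exact ⟨v, e, hv, Or.inr ⟨rfl, hx⟩⟩

lemma aux_filter_eq
    (hadj : ∀ x y, G.Adj x y ↔ ∃ (v : W) (e : H.edgeSet), v ∈ (e : Sym2 W) ∧
        ((x = Sum.inl v ∧ y = Sum.inr e) ∨ (x = Sum.inr e ∧ y = Sum.inl v)))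
    (e : H.edgeSet) (S : Finset W) :
    (S.image Sum.inl).filter (fun x => G.Adj (Sum.inr e) x) =
      (S.filter (fun v => v ∈ (e : Sym2 W))).image Sum.inl := by
  ext x
  simp only [Finset.mem_filter, Finset.mem_image, aux_adj_inr H G hadj]
  constructor
  · rintro ⟨⟨v, hv, rfl⟩, w, hw, hwv⟩
    obtain rfl : w = v := by simpa using hwv.symm
    exact ⟨w, ⟨hv, hw⟩, rfl⟩
  · rintro ⟨v, ⟨hv, hve⟩, rfl⟩
    exact ⟨⟨v, hv, rfl⟩, v, hve, rfl⟩

lemma aux_key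
    (hadj : ∀ x y, G.Adj x y ↔ ∃ (v : W) (e : H.edgeSet), v ∈ (e : Sym2 W) ∧
        ((x = Sum.inl v ∧ y = Sum.inr e) ∨ (x = Sum.inr e ∧ y = Sum.inl v)))
    (S : Finset W) :
    (∀ e : H.edgeSet, ((S.image Sum.inl).filter
        (fun x => G.Adj (Sum.inr e) x)).card ≤ 1) ↔
      (∀ u ∈ S, ∀ v ∈ S, ¬ H.Adj u v) := by
  constructor
  · intro h u hu v hv huv
    have he : s(u, v) ∈ H.edgeSet := huv
    have h1 := h ⟨s(u, v), he⟩
    rw [aux_filter_eq H G hadj,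
        Finset.card_image_of_injective _ Sum.inl_injective] at h1
    have h2 : 1 < (S.filter (fun w => w ∈ ((⟨s(u, v), he⟩ : H.edgeSet) : Sym2 W))).card := by
      rw [Finset.one_lt_card]
      exact ⟨u, by simp [hu], v, by simp [hv], huv.ne⟩
    omega
  · intro h e
    rw [aux_filter_eq H G hadj,
        Finset.card_image_of_injective _ Sum.inl_injective]
    obtain ⟨ab, hab⟩ := e
    induction ab using Sym2.ind with
    | _ a b =>
      have hab' : H.Adj a b := hab
      rw [Finset.card_le_one]
      intro x hx y hy
      simp only [Finset.mem_filter, Sym2.mem_iff] at hx hy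
      obtain ⟨hxS, rfl | rfl⟩ := hx <;> obtain ⟨hyS, rfl | rfl⟩ := hy
      · rfl
      · exact absurd hab' (h _ hxS _ hyS)
      · exact absurd hab' (h _ hyS _ hxS)
      · rfl

end Aux

/-- Correctness of the reduction from Independent Set: in
the subdivision `G` of a graph `H`, where every subdivision vertex `w_e`
(adjacent exactly to the two endpoints of `e`) is occupied by an inhabitant
with upper-bound `1` and all original vertices are empty, `H` has an
independent set of size at least `k` iff the constructed instance with `R = k`
admits an inhabitants-respecting housing.  Moreover, a `k`-sized set of
original vertices is an inhabitants-respecting housing iff it is an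
independent set in `H`. -/
theorem independent_set_reduction_correctness
    {W : Type*} [Fintype W] [DecidableEq W]
    (H : SimpleGraph W) [DecidableRel H.Adj] (k : ℕ)
    (G : SimpleGraph (W ⊕ ↥H.edgeSet)) [DecidableRel G.Adj]
    (hadj : ∀ x y, G.Adj x y ↔ ∃ (v : W) (e : H.edgeSet), v ∈ (e : Sym2 W) ∧
        ((x = Sum.inl v ∧ y = Sum.inr e) ∨ (x = Sum.inr e ∧ y = Sum.inl v))) :
    ((∃ S : Finset W, k ≤ S.card ∧ ∀ u ∈ S, ∀ v ∈ S, ¬ H.Adj u v) ↔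
      (∃ π : Finset (W ⊕ ↥H.edgeSet),
        (∀ x ∈ π, ∃ v : W, x = Sum.inl v) ∧ π.card = k ∧
        ∀ e : H.edgeSet, (π.filter (fun x => G.Adj (Sum.inr e) x)).card ≤ 1)) ∧
    (∀ S : Finset W, S.card = k →
      ((∀ e : H.edgeSet,
          ((S.image Sum.inl).filter (fun x => G.Adj (Sum.inr e) x)).card ≤ 1) ↔
        (∀ u ∈ S, ∀ v ∈ S, ¬ H.Adj u v))) := by
  constructor
  · constructor
    · rintro ⟨S, hk, hind⟩
      obtain ⟨S', hS'sub, hS'card⟩ := Finset.exists_subset_card_eq hk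
      refine ⟨S'.image Sum.inl, by simp, by
        rw [Finset.card_image_of_injective _ Sum.inl_injective, hS'card], ?_⟩
      exact (aux_key H G hadj S').mpr
        (fun u hu v hv => hind u (hS'sub hu) v (hS'sub hv))
    · rintro ⟨π, hall, hcard, hub⟩
      set T : Finset W := Finset.univ.filter (fun v => Sum.inl v ∈ π) with hT
      have hπT : π = T.image Sum.inl := by
        ext x
        constructor
        · intro hx
          obtain ⟨v, rfl⟩ := hall x hx
          exact Finset.mem_image_of_mem _ (by simp [hT, hx])
        · intro hx
          obtain ⟨v, hv, rfl⟩ := Finset.mem_image.mp hx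
          simpa [hT] using hv
      have hTcard : T.card = k := by
        rw [← hcard, hπT, Finset.card_image_of_injective _ Sum.inl_injective]
      refine ⟨T, hTcard.symm.le, (aux_key H G hadj T).mp ?_⟩
      intro e
      rw [← hπT]
      exact hub e
  · intro S _
    exact aux_key H G hadj S
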